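/- Let y : [t,T] → ℝ be continuous, α ∈ ℝ, and let h : [t,T] → ℝ be of bounded variation (so that Stieltjes integrals against dh are defined). If V solves the integral equation V(s) = V(t) + ∫_t^s α·y(u)·V(u) du + ∫_t^s a(u) dh(u) with initial condition V(t) = h(t) and trading strategy a(s) = exp(∫_t^s α·y(η) dη), then V(T) = exp(∫_t^T α·y(η) dη)·h(T). -/

import Mathlib

open MeasureTheory Set intervalIntegral Function

/-- A continuous function times a Stieltjes function is interval integrable. -/
lemma cont_mul_stieltjes_intInt {f : ℝ → ℝ} (hf : Continuous f) (h : StieltjesFunction ℝ)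
    {a b : ℝ} (hab : a ≤ b) : IntervalIntegrable (fun v => f v * h v) volume a b := by
  obtain ⟨C, hC⟩ := isCompact_Icc.exists_bound_of_continuousOn (hf.continuousOn (s := Icc a b))
  have hC0 : 0 ≤ C := le_trans (norm_nonneg _) (hC a ⟨le_rfl, hab⟩)
  have hmono := h.mono
  have hhb : ∀ v ∈ Ioc a b, |h v| ≤ |h a| ⊔ |h b| := by
    intro v hv
    have h1 : h a ≤ h v := hmono hv.1.le
    have h2 : h v ≤ h b := hmono hv.2
    rcases le_or_gt 0 (h v) with hp | hn
    · exact le_sup_of_le_right ((abs_of_nonneg hp).le.trans (h2.trans (le_abs_self _)))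
    · refine le_sup_of_le_left ?_
      rw [abs_of_neg hn]
      exact (neg_le_neg h1).trans (neg_le_abs _)
  rw [intervalIntegrable_iff_integrableOn_Ioc_of_le hab]
  refine Integrable.mono' (integrable_const (C * (|h a| ⊔ |h b|)))
    ((hf.aestronglyMeasurable).mul hmono.measurable.aestronglyMeasurable).restrict ?_
  filter_upwards [ae_restrict_mem measurableSet_Ioc] with v hv
  rw [norm_mul]
  exact mul_le_mul (hC v ⟨hv.1.le, hv.2⟩) (hhb v hv) (abs_nonneg _) hC0

/-- A continuous function is integrable on `Ioc a b` against a Stieltjes measure. -/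
lemma cont_integrableOn_stieltjes {f : ℝ → ℝ} (hf : Continuous f) (h : StieltjesFunction ℝ)
    (a b : ℝ) : IntegrableOn f (Set.Ioc a b) h.measure := by
  rcases le_or_gt a b with hab | hab
  · obtain ⟨C, hC⟩ := isCompact_Icc.exists_bound_of_continuousOn (hf.continuousOn (s := Icc a b))
    have hconst : IntegrableOn (fun _ => C) (Set.Ioc a b) h.measure := by
      refine integrableOn_const (LT.lt.ne ?_)
      rw [h.measure_Ioc]; exact ENNReal.ofReal_lt_top
    refine Integrable.mono' hconst hf.aestronglyMeasurable.restrict ?_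
    filter_upwards [ae_restrict_mem measurableSet_Ioc]    with v hv using hC v ⟨hv.1.le, hv.2⟩
  · rw [Set.Ioc_eq_empty (not_lt.2 hab.le)]
    exact integrableOn_empty

lemma stieltjes_ibp (h : StieltjesFunction ℝ) {g g' : ℝ → ℝ}
    (hg : ∀ x, HasDerivAt g (g' x) x) (hg' : Continuous g')
    {t s : ℝ} (hts : t ≤ s) :
    ∫ u in Set.Ioc t s, g u ∂h.measure
      = g s * h s - g t * h t - ∫ u in t..s, g' u * h u := by
  obtain ⟨C, hC⟩ := isCompact_Icc.exists_bound_of_continuousOn (hg'.continuousOn (s := Icc t s))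
  have hC0 : 0 ≤ C := le_trans (norm_nonneg _) (hC t ⟨le_rfl, hts⟩)
  have hmono := h.mono
  have hIocfin : h.measure (Ioc t s) < ⊤ := by
    rw [h.measure_Ioc]; exact ENNReal.ofReal_lt_top
  haveI : IsFiniteMeasure (h.measure.restrict (Ioc t s)) :=
    ⟨by rwa [Measure.restrict_apply_univ]⟩
  haveI : IsFiniteMeasure (volume.restrict (Ioc t s)) :=
    ⟨by rw [Measure.restrict_apply_univ]; exact measure_Ioc_lt_top⟩
  have hFTC : ∀ u, ∫ v in t..u, g' v = g u - g t := fun u =>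
    intervalIntegral.integral_eq_sub_of_hasDerivAt (fun x _ => hg x) (hg'.intervalIntegrable t u)
  have hhb : ∀ v ∈ Ioc t s, |h v| ≤ |h t| ⊔ |h s| := by
    intro v hv
    have h1 : h t ≤ h v := hmono hv.1.le
    have h2 : h v ≤ h s := hmono hv.2
    rcases le_or_gt 0 (h v) with hp | hn
    · exact le_sup_of_le_right ((abs_of_nonneg hp).le.trans (h2.trans (le_abs_self _)))
    · refine le_sup_of_le_left ?_
      rw [abs_of_neg hn]
      exact (neg_le_neg h1).trans (neg_le_abs _)
  have hint_g'h : IntervalIntegrable (fun v => g' v * h v) volume t s := by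
    rw [intervalIntegrable_iff_integrableOn_Ioc_of_le hts]
    refine Integrable.mono' (integrable_const (C * (|h t| ⊔ |h s|)))
      ((hg'.aestronglyMeasurable).mul hmono.measurable.aestronglyMeasurable).restrict ?_
    filter_upwards [ae_restrict_mem measurableSet_Ioc] with v hv
    rw [norm_mul]
    exact mul_le_mul (hC v ⟨hv.1.le, hv.2⟩) (hhb v hv) (abs_nonneg _) hC0
  set F : ℝ × ℝ → ℝ := fun p => if p.2 ≤ p.1 then g' p.2 else 0 with hF
  have hFmeas : StronglyMeasurable F := by
    have : F = Set.indicator {p : ℝ × ℝ | p.2 ≤ p.1} (fun p => g' p.2) := by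
      ext p; by_cases hp : p.2 ≤ p.1 <;> simp [hF, hp]
    rw [this]
    exact (hg'.comp continuous_snd).stronglyMeasurable.indicator
      (isClosed_le continuous_snd continuous_fst).measurableSet
  have hFint : Integrable (uncurry fun u v => F (u, v))
      ((h.measure.restrict (Ioc t s)).prod (volume.restrict (Ioc t s))) := by
    refine Integrable.mono' (integrable_const C) hFmeas.aestronglyMeasurable ?_
    rw [Measure.prod_restrict]
    filter_upwards [ae_restrict_mem (measurableSet_Ioc.prod measurableSet_Ioc)] with p hp
    by_cases hle : p.2 ≤ p.1
    · simpa [hF, hle, Function.uncurry] using hC p.2 ⟨hp.2.1.le, hp.2.2⟩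
    · simp [hF, hle, hC0, Function.uncurry]
  have swap := integral_integral_swap hFint
  have lhs_eq : (∫ u in Ioc t s, (∫ v in Ioc t s, F (u, v)) ∂h.measure)
      = ∫ u in Ioc t s, (∫ v in t..u, g' v) ∂h.measure := by
    refine setIntegral_congr_ae measurableSet_Ioc ?_
    filter_upwards with u hu
    have hiv : ∀ v, F (u, v) = Set.indicator (Iic u) g' v := by
      intro v; by_cases hv : v ≤ u <;> simp [hF, hv]
    simp_rw [hiv]
    rw [MeasureTheory.integral_indicator measurableSet_Iic,
      Measure.restrict_restrict measurableSet_Iic,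
      intervalIntegral.integral_of_le hu.1.le, Set.Iic_inter_Ioc_of_le hu.2]
  have rhs_eq : (∫ v in Ioc t s, (∫ u in Ioc t s, F (u, v) ∂h.measure))
      = ∫ v in Ioc t s, g' v * (h s - h v) := by
    refine setIntegral_congr_ae measurableSet_Ioc ?_
    have hae : ∀ᵐ v ∂volume, v ∈ Ioc t s → leftLim (h : ℝ → ℝ) v = h v := by
      have hN : volume {x | ¬ContinuousAt (h : ℝ → ℝ) x} = 0 :=
        (hmono.countable_not_continuousAt).measure_zero _
      filter_upwards [compl_mem_ae_iff.2 hN] with v hv _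
      have hcont : ContinuousAt (h : ℝ → ℝ) v := by simpa using hv
      exact leftLim_eq_of_tendsto
        (hcont.tendsto.mono_left nhdsWithin_le_nhds)
    filter_upwards [hae] with v hvl hv
    have hiv : ∀ u, F (u, v) = Set.indicator (Ici v) (fun _ => g' v) u := by
      intro u; by_cases hu : v ≤ u <;> simp [hF, hu]
    simp_rw [hiv]
    rw [MeasureTheory.integral_indicator measurableSet_Ici,
      Measure.restrict_restrict measurableSet_Ici]
    have hset : Ici v ∩ Ioc t s = Icc v s := by
      ext x
      simp only [mem_inter_iff, mem_Ici, mem_Ioc, mem_Icc]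
      exact ⟨fun ⟨h1, _, h3⟩ => ⟨h1, h3⟩, fun ⟨h1, h2⟩ => ⟨h1, hv.1.trans_le h1, h2⟩⟩
    rw [hset, setIntegral_const, measureReal_def, h.measure_Icc, hvl hv, smul_eq_mul,
      ENNReal.toReal_ofReal (sub_nonneg.2 (hmono hv.2)), mul_comm]
  -- assemble
  have hmIoc : (h.measure (Ioc t s)).toReal = h s - h t := by
    rw [h.measure_Ioc, ENNReal.toReal_ofReal (sub_nonneg.2 (hmono hts))]
  have hgc : Continuous g := by
    have : Differentiable ℝ g := fun x => (hg x).differentiableAt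
    exact this.continuous
  obtain ⟨Cg, hCg⟩ := isCompact_Icc.exists_bound_of_continuousOn (hgc.continuousOn (s := Icc t s))
  have hint_prim : Integrable (fun u => ∫ v in t..u, g' v) (h.measure.restrict (Ioc t s)) := by
    simp_rw [hFTC]
    refine Integrable.mono' (integrable_const (Cg + |g t|))
      ((hgc.sub continuous_const).aestronglyMeasurable).restrict ?_
    filter_upwards [ae_restrict_mem measurableSet_Ioc] with u hu
    calc ‖g u - g t‖ ≤ ‖g u‖ + ‖g t‖ := norm_sub_le _ _
      _ ≤ Cg + |g t| := add_le_add (hCg u ⟨hu.1.le, hu.2⟩) le_rfl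
  calc ∫ u in Ioc t s, g u ∂h.measure
      = ∫ u in Ioc t s, (g t + ∫ v in t..u, g' v) ∂h.measure := by
        refine setIntegral_congr_ae measurableSet_Ioc ?_
        filter_upwards with u _
        rw [hFTC]; ring
    _ = g t * (h s - h t) + ∫ u in Ioc t s, (∫ v in t..u, g' v) ∂h.measure := by
        rw [MeasureTheory.integral_add (integrable_const _) hint_prim, setIntegral_const,
          measureReal_def, hmIoc, smul_eq_mul]
        ring
    _ = g t * (h s - h t) + ∫ v in Ioc t s, g' v * (h s - h v) := by
        rw [← lhs_eq, swap, rhs_eq]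
    _ = g t * (h s - h t) + (h s * (g s - g t) - ∫ v in t..s, g' v * h v) := by
        congr 1
        rw [← intervalIntegral.integral_of_le hts]
        have e1 : ∀ v, g' v * (h s - h v) = g' v * h s - g' v * h v := fun v => by ring
        simp_rw [e1]
        rw [intervalIntegral.integral_sub (f := fun x => g' x * h s) ((hg'.mul continuous_const).intervalIntegrable t s) hint_g'h,
          intervalIntegral.integral_mul_const, hFTC]
        ring
    _ = g s * h s - g t * h t - ∫ u in t..s, g' u * h u := by ring


/-- Deterministic core of the collateral replication argument.
Let `y` be continuous on `[t,T]`, `α ∈ ℝ`, and let the bounded-variation price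
process `h` be given as a difference `h = h₁ − h₂` of (right-continuous monotone)
Stieltjes functions, so that the Stieltjes integral `∫ a dh` is defined as the
difference of the Lebesgue–Stieltjes integrals against `h₁.measure` and
`h₂.measure`.  If `V` solves
`V(s) = V(t) + ∫_t^s α·y(u)·V(u) du + ∫_t^s a(u) dh(u)` with `V(t) = h(t)` and
trading strategy `a(s) = exp(∫_t^s α·y(η) dη)`, then
`V(T) = exp(∫_t^T α·y(η) dη)·h(T)`. -/
theorem collateral_account_solution
    (t T : ℝ) (htT : t ≤ T) (α : ℝ) (y V : ℝ → ℝ)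
    (hy : ContinuousOn y (Set.Icc t T))
    (h₁ h₂ : StieltjesFunction ℝ)
    (a : ℝ → ℝ) (ha : ∀ s, a s = Real.exp (∫ η in t..s, α * y η))
    (hV : ∀ s ∈ Set.Icc t T,
      V s = V t + (∫ u in t..s, α * y u * V u) +
        ((∫ u in Set.Ioc t s, a u ∂h₁.measure) - (∫ u in Set.Ioc t s, a u ∂h₂.measure)))
    (hinit : V t = h₁ t - h₂ t) :
    V T = Real.exp (∫ η in t..T, α * y η) * (h₁ T - h₂ T) := by
  classical
  -- continuous extension of y
  set yt : ℝ → ℝ := fun u => y (Set.projIcc t T htT u) with hyt_def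
  have hytc : Continuous yt := (ContinuousOn.restrict hy).comp continuous_projIcc
  have hyt_eq : ∀ u ∈ Set.Icc t T, yt u = y u := fun u hu => by
    simp only [hyt_def, Set.projIcc_of_mem htT hu]
  -- the C¹ trading strategy
  set aC : ℝ → ℝ := fun u => Real.exp (∫ η in t..u, α * yt η) with haC_def
  have hA0deriv : ∀ u, HasDerivAt (fun v => ∫ η in t..v, α * yt η) (α * yt u) u := fun u =>
    ((continuous_const.mul hytc).integral_hasStrictDerivAt t u).hasDerivAt
  have haCderiv : ∀ u, HasDerivAt aC (α * yt u * aC u) u := fun u => by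
    simpa [haC_def, mul_comm] using (hA0deriv u).exp
  have haCc : Continuous aC := by
    have hd : Differentiable ℝ (fun v => ∫ η in t..v, α * yt η) := fun u =>
      (hA0deriv u).differentiableAt
    exact Real.continuous_exp.comp hd.continuous
  have haCpos : ∀ u, 0 < aC u := fun u => Real.exp_pos _
  have haC_eq : ∀ s ∈ Set.Icc t T, a s = aC s := by
    intro s hs
    rw [ha s, haC_def]
    congr 1
    refine intervalIntegral.integral_congr fun u hu => ?_
    rw [Set.uIcc_of_le hs.1] at hu
    rw [hyt_eq u ⟨hu.1, hu.2.trans hs.2⟩]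
  have haCt : aC t = 1 := by simp [haC_def]
  set g' : ℝ → ℝ := fun u => α * yt u * aC u with hg'_def
  have hg'c : Continuous g' := (continuous_const.mul hytc).mul haCc
  set U : ℝ → ℝ := fun u => aC u * (h₁ u - h₂ u) with hU_def
  have hUtVt : U t = V t := by rw [hU_def]; simp only [haCt, one_mul]; rw [hinit]
  set g₂ : ℝ → ℝ := fun u => g' u * (h₁ u - h₂ u) with hg₂_def
  have hg₂sub : g₂ = fun u => g' u * h₁ u - g' u * h₂ u := funext fun u => by
    simp only [hg₂_def]; ring
  have hg₂ii : ∀ s, t ≤ s → IntervalIntegrable g₂ volume t s := by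
    intro s hs
    rw [hg₂sub]
    exact (cont_mul_stieltjes_intInt hg'c h₁ hs).sub (cont_mul_stieltjes_intInt hg'c h₂ hs)
  -- the Stieltjes part
  set S : ℝ → ℝ := fun s =>
    (∫ u in Set.Ioc t s, aC u ∂h₁.measure) - (∫ u in Set.Ioc t s, aC u ∂h₂.measure) with hS_def
  have hS_eq : ∀ s ∈ Set.Icc t T,
      ((∫ u in Set.Ioc t s, a u ∂h₁.measure) - (∫ u in Set.Ioc t s, a u ∂h₂.measure)) = S s := by
    intro s hs
    rw [hS_def]
    congr 1 <;>
    · refine setIntegral_congr_fun measurableSet_Ioc fun u hu => ?_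
      exact haC_eq u ⟨hu.1.le, hu.2.trans hs.2⟩
  have hVS : ∀ s ∈ Set.Icc t T, V s = V t + (∫ u in t..s, α * y u * V u) + S s := by
    intro s hs
    rw [hV s hs, hS_eq s hs]
  -- U satisfies the same equation
  have hU_eqn : ∀ s ∈ Set.Icc t T, U s = U t + (∫ u in t..s, g₂ u) + S s := by
    intro s hs
    have i1 := stieltjes_ibp h₁ haCderiv hg'c hs.1
    have i2 := stieltjes_ibp h₂ haCderiv hg'c hs.1
    have isub : (∫ u in t..s, g' u * h₁ u) - (∫ u in t..s, g' u * h₂ u)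
        = ∫ u in t..s, g₂ u := by
      rw [← intervalIntegral.integral_sub (cont_mul_stieltjes_intInt hg'c h₁ hs.1)
        (cont_mul_stieltjes_intInt hg'c h₂ hs.1)]
      exact intervalIntegral.integral_congr fun u _ => by simp only [hg₂_def]; ring
    have hSs : S s = U s - U t - ∫ u in t..s, g₂ u := by
      rw [hS_def]
      simp only [i1, i2]
      rw [← isub]
      simp only [hU_def]
      ring
    rw [hSs]; ring
  -- bounds
  obtain ⟨M₀, hM₀⟩ := isCompact_Icc.exists_bound_of_continuousOn
    ((continuous_const.mul hytc).continuousOn (s := Set.Icc t T))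
  set M := max M₀ 0 with hM_def
  have hMnn : 0 ≤ M := le_max_right _ _
  have hM : ∀ u ∈ Set.Icc t T, |α * yt u| ≤ M := fun u hu =>
    (hM₀ u hu).trans (le_max_left _ _)
  -- monotonicity and measurability of the Stieltjes part
  have hS₁mono : Monotone (fun s => ∫ u in Set.Ioc t s, aC u ∂h₁.measure) := by
    intro s s' hss'
    refine setIntegral_mono_set (cont_integrableOn_stieltjes haCc h₁ t s') ?_ ?_
    · filter_upwards with u using (haCpos u).le
    · exact HasSubset.Subset.eventuallyLE (Set.Ioc_subset_Ioc_right hss')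
  have hS₂mono : Monotone (fun s => ∫ u in Set.Ioc t s, aC u ∂h₂.measure) := by
    intro s s' hss'
    refine setIntegral_mono_set (cont_integrableOn_stieltjes haCc h₂ t s') ?_ ?_
    · filter_upwards with u using (haCpos u).le
    · exact HasSubset.Subset.eventuallyLE (Set.Ioc_subset_Ioc_right hss')
  have hSmeas : Measurable S := by
    rw [hS_def]
    exact (hS₁mono.measurable).sub (hS₂mono.measurable)
  have hS₁nonneg : ∀ s, 0 ≤ ∫ u in Set.Ioc t s, aC u ∂h₁.measure := fun s =>
    setIntegral_nonneg measurableSet_Ioc fun u _ => (haCpos u).le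
  have hS₂nonneg : ∀ s, 0 ≤ ∫ u in Set.Ioc t s, aC u ∂h₂.measure := fun s =>
    setIntegral_nonneg measurableSet_Ioc fun u _ => (haCpos u).le
  set KS := (∫ u in Set.Ioc t T, aC u ∂h₁.measure) + (∫ u in Set.Ioc t T, aC u ∂h₂.measure)
    with hKS_def
  have hSbd : ∀ s ∈ Set.Icc t T, |S s| ≤ KS := by
    intro s hs
    rw [hS_def, hKS_def]
    rw [abs_sub_le_iff]
    constructor
    · have := hS₁mono hs.2
      have := hS₂nonneg s
      have := hS₂nonneg T
      simp only at *
      linarith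
    · have := hS₂mono hs.2
      have := hS₁nonneg s
      have := hS₁nonneg T
      simp only at *
      linarith
  -- KEY: uniqueness on any interval where the V-integrand is integrable
  have key : ∀ s₀ ∈ Set.Icc t T, IntegrableOn (fun u => α * y u * V u) (Set.Ioc t s₀) volume →
      ∀ s ∈ Set.Icc t s₀, V s = U s := by
    intro s₀ hs₀ hint
    set f : ℝ → ℝ := fun u => α * y u * V u with hf_def
    set φ : ℝ → ℝ := fun s => ∫ u in t..s, f u with hφ_def
    set ψ : ℝ → ℝ := fun s => ∫ u in t..s, g₂ u with hψ_def
    set D : ℝ → ℝ := fun s => φ s - ψ s with hD_def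
    have hsub : Set.Icc t s₀ ⊆ Set.Icc t T := Set.Icc_subset_Icc le_rfl hs₀.2
    have hfii : IntervalIntegrable f volume t s₀ :=
      (intervalIntegrable_iff_integrableOn_Ioc_of_le hs₀.1).2 hint
    have huIcc : ∀ s ∈ Set.Icc t s₀, Set.uIcc t s ⊆ Set.uIcc t s₀ := by
      intro s hs
      rw [Set.uIcc_of_le hs.1, Set.uIcc_of_le hs₀.1]
      exact Set.Icc_subset_Icc le_rfl hs.2
    have hfii' : ∀ s ∈ Set.Icc t s₀, IntervalIntegrable f volume t s := fun s hs =>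
      hfii.mono_set (huIcc s hs)
    have hg₂ii' : ∀ s ∈ Set.Icc t s₀, IntervalIntegrable g₂ volume t s := fun s hs =>
      hg₂ii s hs.1
    have hDU : ∀ s ∈ Set.Icc t s₀, V s - U s = D s := by
      intro s hs
      rw [hVS s (hsub hs), hU_eqn s (hsub hs), hUtVt, hD_def, hφ_def, hψ_def]
      simp only [hf_def]
      ring
    have hDprim : ∀ s ∈ Set.Icc t s₀, D s = ∫ u in t..s, (f u - g₂ u) := by
      intro s hs
      simp only [hD_def, hφ_def, hψ_def]
      exact (intervalIntegral.integral_sub (hfii' s hs) (hg₂ii' s hs)).symm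
    have hDc : ContinuousOn D (Set.Icc t s₀) := by
      have h1 : ContinuousOn φ (Set.Icc t s₀) := by
        have := intervalIntegral.continuousOn_primitive_interval (μ := volume) (a := t)
          (b := s₀) (f := f) (by
            rw [Set.uIcc_of_le hs₀.1, integrableOn_Icc_iff_integrableOn_Ioc]
            exact hint)
        rwa [Set.uIcc_of_le hs₀.1] at this
      have h2 : ContinuousOn ψ (Set.Icc t s₀) := by
        have := intervalIntegral.continuousOn_primitive_interval (μ := volume) (a := t)
          (b := s₀) (f := g₂) (by
            rw [Set.uIcc_of_le hs₀.1, integrableOn_Icc_iff_integrableOn_Ioc]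
            exact (intervalIntegrable_iff_integrableOn_Ioc_of_le hs₀.1).1 (hg₂ii s₀ hs₀.1))
        rwa [Set.uIcc_of_le hs₀.1] at this
      exact h1.sub h2
    have hfg₂ : ∀ u ∈ Set.Icc t s₀, f u - g₂ u = (α * yt u) * D u := by
      intro u hu
      have hu' := hsub hu
      have e1 : f u = α * yt u * V u := by rw [hf_def, hyt_eq u hu']
      have e2 : g₂ u = α * yt u * U u := by rw [hg₂_def, hg'_def, hU_def]; ring
      rw [e1, e2, ← hDU u hu]
      ring
    set P : ℝ → ℝ := fun s => ∫ u in t..s, M * |D u| with hP_def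
    have hMDc : ContinuousOn (fun u => M * |D u|) (Set.Icc t s₀) :=
      continuousOn_const.mul hDc.abs
    have hMDii : ∀ s1 ∈ Set.Icc t s₀, ∀ s2 ∈ Set.Icc t s₀,
        IntervalIntegrable (fun u => M * |D u|) volume s1 s2 := by
      intro s1 hs1 s2 hs2
      refine (hMDc.mono ?_).intervalIntegrable
      exact Set.uIcc_subset_Icc hs1 hs2
    have hts₀ : t ∈ Set.Icc t s₀ := ⟨le_rfl, hs₀.1⟩
    have hDP : ∀ s ∈ Set.Icc t s₀, |D s| ≤ P s := by
      intro s hs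
      rw [hDprim s hs, hP_def]
      have habs : |∫ u in t..s, (f u - g₂ u)| ≤ ∫ u in t..s, |f u - g₂ u| :=
        intervalIntegral.abs_integral_le_integral_abs hs.1
      refine habs.trans ?_
      have hsubii : IntervalIntegrable (fun u => |f u - g₂ u|) volume t s := by
        have := ((hfii' s hs).sub (hg₂ii' s hs)).norm
        simpa only [Real.norm_eq_abs] using this
      refine intervalIntegral.integral_mono_on hs.1 hsubii (hMDii t hts₀ s hs) ?_
      intro u hu
      have hu' : u ∈ Set.Icc t s₀ := ⟨hu.1, hu.2.trans hs.2⟩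
      rw [hfg₂ u hu', abs_mul]
      exact mul_le_mul_of_nonneg_right (hM u (hsub hu')) (abs_nonneg _)
    have hPc : ContinuousOn P (Set.Icc t s₀) := by
      have := intervalIntegral.continuousOn_primitive_interval (μ := volume) (a := t)
        (b := s₀) (f := fun u => M * |D u|) (by
          rw [Set.uIcc_of_le hs₀.1]
          exact hMDc.integrableOn_Icc)
      rwa [Set.uIcc_of_le hs₀.1] at this
    have hPt : P t ≤ 0 := by rw [hP_def]; simp
    have hgrb := le_gronwallBound_of_liminf_deriv_right_le (f := P)
      (f' := fun x => M * |D x|) (δ := 0) (K := M) (ε := 0) (a := t) (b := s₀) hPc ?_ hPt ?_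
    rotate_left
    · -- liminf condition
      intro x hx r hr
      replace hr : M * |D x| < r := hr
      set r' := (M * |D x| + r) / 2 with hr'_def
      have hr'1 : M * |D x| < r' := by rw [hr'_def]; linarith
      have hr'2 : r' < r := by rw [hr'_def]; linarith
      have hxmem : x ∈ Set.Icc t s₀ := Set.Ico_subset_Icc_self hx
      have hcont : ContinuousWithinAt (fun u => M * |D u|) (Set.Icc t s₀) x := hMDc x hxmem
      have hev : {u | M * |D u| < r'} ∈ nhdsWithin x (Set.Icc t s₀) :=
        hcont (Iio_mem_nhds hr'1)
      rw [Metric.mem_nhdsWithin_iff] at hev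
      obtain ⟨δ', hδ'pos, hδ'⟩ := hev
      have hxs : x < s₀ := hx.2
      set m := min (x + δ' / 2) s₀ with hm_def
      have hxm : x < m := lt_min (by linarith) hxs
      refine Filter.Eventually.frequently ?_
      filter_upwards [Ioc_mem_nhdsGT_of_mem ⟨le_rfl, hxm⟩] with z hz
      have hzx : x < z := hz.1
      have hzs : z ≤ s₀ := hz.2.trans (min_le_right _ _)
      have hzd : z - x < δ' := by
        have : z ≤ x + δ' / 2 := hz.2.trans (min_le_left _ _)
        linarith
      have hzt : t ≤ z := hx.1.trans hzx.le
      have hzmem : z ∈ Set.Icc t s₀ := ⟨hzt, hzs⟩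
      have hPdiff : P z - P x = ∫ u in x..z, M * |D u| := by
        rw [hP_def]
        exact intervalIntegral.integral_interval_sub_left (hMDii t hts₀ z hzmem)
          (hMDii t hts₀ x hxmem)
      have hptw : ∀ u ∈ Set.Icc x z, M * |D u| ≤ r' := by
        intro u hu
        refine (hδ' ⟨?_, ⟨hx.1.trans hu.1, hu.2.trans hzs⟩⟩).le
        rw [Metric.mem_ball, Real.dist_eq, abs_of_nonneg (sub_nonneg.2 hu.1)]
        have : u ≤ z := hu.2
        linarith
      have hbd : ∫ u in x..z, M * |D u| ≤ r' * (z - x) := by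
        have hii : IntervalIntegrable (fun u => M * |D u|) volume x z := by
          refine (hMDc.mono ?_).intervalIntegrable
          rw [Set.uIcc_of_le hzx.le]
          exact Set.Icc_subset_Icc hxmem.1 hzs
        have := intervalIntegral.integral_mono_on hzx.le hii intervalIntegrable_const hptw
        rw [intervalIntegral.integral_const, smul_eq_mul] at this
        linarith [this]
      rw [hPdiff]
      calc (z - x)⁻¹ * ∫ u in x..z, M * |D u| ≤ (z - x)⁻¹ * (r' * (z - x)) :=
            mul_le_mul_of_nonneg_left hbd (inv_nonneg.2 (sub_nonneg.2 hzx.le))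
        _ = r' := by
            field_simp
            exact mul_div_cancel_left₀ r' (sub_ne_zero.2 hzx.ne')
        _ < r := hr'2
    · -- derivative bound
      intro x hx
      rw [add_zero]
      exact mul_le_mul_of_nonneg_left (hDP x (Set.Ico_subset_Icc_self hx)) hMnn
    -- conclude
    intro s hs
    have hPle := hgrb s hs
    rw [gronwallBound_ε0_δ0] at hPle
    have hDz : D s = 0 := abs_nonpos_iff.1 ((hDP s hs).trans hPle)
    have := hDU s hs
    rw [hDz] at this
    linarith
  -- bootstrap: the set on which V = U
  set E := {s : ℝ | s ∈ Set.Icc t T ∧ ∀ u ∈ Set.Icc t s, V u = U u} with hE_def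
  have htE : t ∈ E := ⟨⟨le_rfl, htT⟩, fun u hu => by
    have : u = t := le_antisymm hu.2 hu.1
    rw [this, ← hUtVt]⟩
  have hEne : E.Nonempty := ⟨t, htE⟩
  have hEbdd : BddAbove E := ⟨T, fun s hsE => hsE.1.2⟩
  set τ := sSup E with hτ_def
  have hτmem : τ ∈ Set.Icc t T := ⟨le_csSup hEbdd htE, csSup_le hEne fun s hsE => hsE.1.2⟩
  have hVU_lt : ∀ u, t ≤ u → u < τ → V u = U u := by
    intro u htu huτ
    obtain ⟨s', hs'E, hus'⟩ := exists_lt_of_lt_csSup hEne huτ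
    exact hs'E.2 u ⟨htu, hus'.le⟩
  have hVUτ : V τ = U τ := by
    rcases eq_or_lt_of_le hτmem.1 with h | h
    · rw [← h, ← hUtVt]
    · have hae : (fun u => α * y u * V u) =ᵐ[volume.restrict (Set.Ioc t τ)] g₂ := by
        refine (ae_restrict_iff' measurableSet_Ioc).2 ?_
        filter_upwards [compl_mem_ae_iff.2 (Real.volume_singleton (a := τ))] with u hu huIoc
        have hult : u < τ := lt_of_le_of_ne huIoc.2 (by simpa using hu)
        have huI : u ∈ Set.Icc t T := ⟨huIoc.1.le, huIoc.2.trans hτmem.2⟩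
        rw [show y u = yt u from (hyt_eq u huI).symm, hVU_lt u huIoc.1.le hult]
        simp only [hg₂_def, hg'_def, hU_def]
        ring
      have e1 : (∫ u in t..τ, α * y u * V u) = ∫ u in t..τ, g₂ u := by
        rw [intervalIntegral.integral_of_le hτmem.1, intervalIntegral.integral_of_le hτmem.1]
        exact integral_congr_ae hae
      rw [hVS τ hτmem, hU_eqn τ hτmem, hUtVt, e1]
  have hτfull : ∀ u ∈ Set.Icc t τ, V u = U u := by
    intro u hu
    rcases lt_or_eq_of_le hu.2 with h | h
    · exact hVU_lt u hu.1 h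
    · rw [h]; exact hVUτ
  have hτT : τ = T := by
    by_contra hne
    have hτlt : τ < T := lt_of_le_of_ne hτmem.2 hne
    by_cases hcase : ∃ s₁ ∈ Set.Ioc τ T,
        IntegrableOn (fun u => α * y u * V u) (Set.Ioc t s₁) volume
    · obtain ⟨s₁, hs₁, hintg⟩ := hcase
      have hs₁Icc : s₁ ∈ Set.Icc t T := ⟨hτmem.1.trans hs₁.1.le, hs₁.2⟩
      have hs₁E : s₁ ∈ E := ⟨hs₁Icc, fun u hu => key s₁ hs₁Icc hintg u hu⟩
      exact absurd hs₁.1 (not_lt.2 (le_csSup hEbdd hs₁E))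
    · push_neg at hcase
      have hVform : ∀ s₁ ∈ Set.Ioc τ T, V s₁ = V t + S s₁ := by
        intro s₁ hs₁
        have hts₁ : t ≤ s₁ := hτmem.1.trans hs₁.1.le
        have h0 : (∫ u in t..s₁, α * y u * V u) = 0 := by
          rw [intervalIntegral.integral_of_le hts₁]
          exact integral_undef (hcase s₁ hs₁)
        rw [hVS s₁ ⟨hts₁, hs₁.2⟩, h0]
        ring
      have hfIoc : IntegrableOn (fun u => α * y u * V u) (Set.Ioc t T) volume := by
        rw [← Set.Ioc_union_Ioc_eq_Ioc hτmem.1 hτmem.2]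
        refine MeasureTheory.IntegrableOn.union ?_ ?_
        · have hbase : IntegrableOn g₂ (Set.Ioc t τ) volume :=
            (intervalIntegrable_iff_integrableOn_Ioc_of_le hτmem.1).1 (hg₂ii τ hτmem.1)
          refine hbase.congr_fun ?_ measurableSet_Ioc
          intro u hu
          have huI : u ∈ Set.Icc t T := ⟨hu.1.le, hu.2.trans hτmem.2⟩
          rw [show (fun u => α * y u * V u) u = α * y u * V u from rfl,
            show y u = yt u from (hyt_eq u huI).symm, hτfull u ⟨hu.1.le, hu.2⟩]
          simp only [hg₂_def, hg'_def, hU_def]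
          ring
        · have hmeasf : AEStronglyMeasurable (fun u => α * yt u * (V t + S u))
              (volume.restrict (Set.Ioc τ T)) :=
            (((continuous_const.mul hytc).measurable.mul
              (measurable_const.add hSmeas)).aestronglyMeasurable).restrict
          have hb : IntegrableOn (fun u => α * yt u * (V t + S u)) (Set.Ioc τ T) volume := by
            refine Integrable.mono' (g := fun _ => M * (|V t| + KS)) ?_ hmeasf ?_
            · exact integrableOn_const measure_Ioc_lt_top.ne
            · filter_upwards [ae_restrict_mem measurableSet_Ioc] with u hu
              have huI : u ∈ Set.Icc t T := ⟨hτmem.1.trans hu.1.le, hu.2⟩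
              rw [Real.norm_eq_abs, abs_mul]
              refine mul_le_mul (hM u huI) ?_ (abs_nonneg _) hMnn
              exact (abs_add_le _ _).trans (add_le_add le_rfl (hSbd u huI))
          refine hb.congr_fun ?_ measurableSet_Ioc
          intro u hu
          have huI : u ∈ Set.Icc t T := ⟨hτmem.1.trans hu.1.le, hu.2⟩
          show α * yt u * (V t + S u) = α * y u * V u
          rw [hyt_eq u huI, hVform u hu]
      exact hcase T ⟨hτlt, le_rfl⟩ hfIoc
  -- conclusion
  have hVT : V T = U T := hτfull T ⟨htT, le_of_eq hτT.symm⟩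
  rw [hVT]
  have hexp : Real.exp (∫ η in t..T, α * y η) = aC T := by
    rw [← ha T]
    exact haC_eq T ⟨htT, le_rfl⟩
  rw [hexp]
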